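/- arXiv:1903.01464 — 3 statements merged into one kernel-verified Lean document; each statement's English description precedes it below -/
import Mathlib

section
/- If every interaction score is at least the cooperative threshold, i.e. ϑ_i ≥ θ_co for all i with 0 < θ_co < 1, then the Experience value satisfies the geometric bound 0 < 1 - Exp_t ≤ (1 - Exp_0)·(1 - θ_co·α)^t for every t ≥ 0. -/
/-- If every interaction score is at least the cooperative threshold,
i.e. `ϑ i ≥ θco` for all `i ≥ 1` with `0 < θco < 1`, then the Experience value satisfies
the geometric bound `0 < 1 - Exp t ≤ (1 - Exp 0) * (1 - θco * α) ^ t` for every `t ≥ 0`. -/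
theorem experience_geometric_bound
    (Exp ϑ : ℕ → ℝ) (α θco : ℝ)
    (hExp0 : 0 < Exp 0 ∧ Exp 0 < 1)
    (hα : 0 < α ∧ α < 1)
    (hϑ : ∀ t, 1 ≤ t → 0 < ϑ t ∧ ϑ t < 1)
    (hθco : 0 < θco ∧ θco < 1)
    (hco : ∀ i, 1 ≤ i → θco ≤ ϑ i)
    (hrec : ∀ t, Exp (t + 1) = Exp t + ϑ (t + 1) * α * (1 - Exp t)) :
    ∀ t, 0 < 1 - Exp t ∧ 1 - Exp t ≤ (1 - Exp 0) * (1 - θco * α) ^ t := by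
  intro t
  induction t with
  | zero => constructor <;> simp <;> nlinarith [hExp0.1, hExp0.2]
  | succ n ih =>
    obtain ⟨ih1, ih2⟩ := ih
    have hn := hϑ (n+1) (by omega)
    have hcn := hco (n+1) (by omega)
    have key : 1 - Exp (n+1) = (1 - ϑ (n+1) * α) * (1 - Exp n) := by
      rw [hrec n]; ring
    constructor
    · rw [key]
      have : ϑ (n+1) * α < 1 := by nlinarith [hn.1, hn.2, hα.1, hα.2]
      nlinarith
    · rw [key, pow_succ]
      have h1 : 1 - ϑ (n+1) * α ≤ 1 - θco * α := by nlinarith [hα.1]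
      have h2 : 0 < 1 - θco * α := by nlinarith [hθco.1, hθco.2, hα.1, hα.2]
      calc (1 - ϑ (n+1) * α) * (1 - Exp n) ≤ (1 - θco * α) * (1 - Exp n) := by
              nlinarith
        _ ≤ (1 - θco * α) * ((1 - Exp 0) * (1 - θco * α) ^ n) := by nlinarith
        _ = (1 - Exp 0) * ((1 - θco * α) ^ n * (1 - θco * α)) := by ring
end

section
/- If every interaction score is at least the cooperative threshold θ_co, then for every ε with 0 < ε < 1 there exists a time T such that for all t ≥ T the Experience value satisfies Exp_t ≥ 1 - ε; i.e., any prescribed Experience level below 1 is attained after finitely many cooperative interactions. -/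
/-- If every interaction score is at least the cooperative threshold `θco`,
then for every `ε` with `0 < ε < 1` there exists a time `T` such that for all `t ≥ T`
the Experience value satisfies `Exp t ≥ 1 - ε`. -/
theorem experience_reaches_any_level
    (Exp ϑ : ℕ → ℝ) (α θco : ℝ)
    (hExp0 : 0 < Exp 0 ∧ Exp 0 < 1)
    (hα : 0 < α ∧ α < 1)
    (hϑ : ∀ t, 1 ≤ t → 0 < ϑ t ∧ ϑ t < 1)
    (hθco : 0 < θco ∧ θco < 1)
    (hco : ∀ t, 1 ≤ t → θco ≤ ϑ t)
    (hrec : ∀ t, Exp (t + 1) = Exp t + ϑ (t + 1) * α * (1 - Exp t)) :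
    ∀ ε : ℝ, 0 < ε → ε < 1 → ∃ T : ℕ, ∀ t, T ≤ t → 1 - ε ≤ Exp t := by
  intro ε hε hε1
  set r : ℝ := 1 - θco * α with hr
  have hr0 : 0 ≤ r := by nlinarith [hθco.1, hθco.2, hα.1, hα.2]
  have hr1 : r < 1 := by nlinarith [hθco.1, hα.1]
  have key : ∀ t : ℕ, 0 ≤ 1 - Exp t ∧ 1 - Exp t ≤ r ^ t * (1 - Exp 0) := by
    intro t
    induction t with
    | zero => constructor <;> simp <;> linarith [hExp0.2]
    | succ n ih =>
      have hrecn := hrec n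
      have hϑn := hϑ (n + 1) (by omega)
      have hcon := hco (n + 1) (by omega)
      have h1 : 1 - Exp (n + 1) = (1 - ϑ (n + 1) * α) * (1 - Exp n) := by
        rw [hrecn]; ring
      have hfac0 : 0 ≤ 1 - ϑ (n + 1) * α := by nlinarith [hϑn.2, hα.2, hα.1]
      have hfacr : 1 - ϑ (n + 1) * α ≤ r := by nlinarith [hα.1]
      constructor
      · rw [h1]; exact mul_nonneg hfac0 ih.1
      · rw [h1, pow_succ, mul_comm (r ^ n) r, mul_assoc]
        exact mul_le_mul hfacr ih.2 ih.1 hr0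
  have hE0 : 0 < 1 - Exp 0 := by linarith [hExp0.2]
  obtain ⟨T, hT⟩ := exists_pow_lt_of_lt_one (div_pos hε hE0) hr1
  refine ⟨T, fun t ht => ?_⟩
  have hmono : r ^ t ≤ r ^ T := pow_le_pow_of_le_one hr0 hr1.le ht
  have : 1 - Exp t ≤ r ^ T * (1 - Exp 0) :=
    le_trans (key t).2 (mul_le_mul_of_nonneg_right hmono hE0.le)
  have hTε : r ^ T * (1 - Exp 0) < ε := by
    rw [← lt_div_iff₀ hE0] at *
    linarith [hT]
  linarith
end

section
/- Power iteration for the PageRank-style reputation matrix converges geometrically: if r is a probability vector with A·r = r, then for every probability vector x and every k ≥ 0, ‖A^k·x - r‖₁ ≤ d^k·‖x - r‖₁; consequently the iterates A^k·x converge to r as k → ∞, justifying the iterative computation of the reputation vector. -/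
open Filter

/-- Power iteration for the PageRank-style reputation matrix converges
geometrically: if `r` is a probability vector with `A·r = r`, then for every probability
vector `x` and every `k ≥ 0`, `‖A^k·x - r‖₁ ≤ d^k·‖x - r‖₁`; consequently the iterates
`A^k·x` converge to `r` as `k → ∞`. -/
theorem pagerank_power_iteration_converges
    (N : ℕ) (hN : 1 ≤ N)
    (W : Matrix (Fin N) (Fin N) ℝ)
    (hWnonneg : ∀ i j, 0 ≤ W i j)
    (hWcol : ∀ j, ∑ i, W i j = 1)
    (d : ℝ) (hd : 0 < d ∧ d < 1)
    (E A : Matrix (Fin N) (Fin N) ℝ)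
    (hE : ∀ i j, E i j = 1)
    (hA : A = ((1 - d) / (N : ℝ)) • E + d • W)
    (r : Fin N → ℝ)
    (hr : (∀ i, 0 ≤ r i) ∧ (∑ i, r i = 1) ∧ A.mulVec r = r) :
    ∀ x : Fin N → ℝ, (∀ i, 0 ≤ x i) → (∑ i, x i = 1) →
      (∀ k : ℕ, ∑ i, |(A ^ k).mulVec x i - r i| ≤ d ^ k * ∑ i, |x i - r i|) ∧
      Tendsto (fun k : ℕ => (A ^ k).mulVec x) atTop (nhds r) := by
  intro x hx hxsum
  obtain ⟨hrpos, hrsum, hrfix⟩ := hr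
  -- A applied to a zero-sum vector equals d • (W applied to it)
  have key : ∀ v : Fin N → ℝ, (∑ i, v i) = 0 →
      ∀ i, A.mulVec v i = d * W.mulVec v i := by
    intro v hv i
    have hEv : E.mulVec v i = 0 := by
      simp [Matrix.mulVec, dotProduct, hE, hv]
    simp [hA, Matrix.add_mulVec, Matrix.smul_mulVec, hEv]
  -- W preserves sums
  have sumpres : ∀ v : Fin N → ℝ, ∑ i, W.mulVec v i = ∑ i, v i := by
    intro v
    simp only [Matrix.mulVec, dotProduct]
    rw [Finset.sum_comm]
    simp [← Finset.sum_mul, hWcol]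
  -- W is an ℓ¹ contraction
  have contract : ∀ v : Fin N → ℝ, ∑ i, |W.mulVec v i| ≤ ∑ i, |v i| := by
    intro v
    calc ∑ i, |W.mulVec v i| ≤ ∑ i, ∑ j, W i j * |v j| := by
          refine Finset.sum_le_sum fun i _ => ?_
          have h1 : W.mulVec v i = ∑ j, W i j * v j := rfl
          rw [h1]
          have h2 := Finset.abs_sum_le_sum_abs (fun j => W i j * v j) Finset.univ
          refine h2.trans_eq (Finset.sum_congr rfl fun j _ => ?_)
          rw [abs_mul, abs_of_nonneg (hWnonneg i j)]
      _ = ∑ j, (∑ i, W i j) * |v j| := by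
          rw [Finset.sum_comm]; simp [Finset.sum_mul]
      _ = ∑ j, |v j| := by simp [hWcol]
  -- main induction
  have main : ∀ k : ℕ, (∑ i, ((A ^ k).mulVec x i - r i)) = 0 ∧
      ∑ i, |(A ^ k).mulVec x i - r i| ≤ d ^ k * ∑ i, |x i - r i| := by
    intro k
    induction k with
    | zero =>
      constructor
      · simp [Matrix.one_mulVec, Finset.sum_sub_distrib, hxsum, hrsum]
      · simp [Matrix.one_mulVec]
    | succ k ih =>
      obtain ⟨ih0, ih1⟩ := ih
      set v : Fin N → ℝ := fun i => (A ^ k).mulVec x i - r i with hvdef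
      have hv0 : ∑ i, v i = 0 := ih0
      have hstep : ∀ i, (A ^ (k+1)).mulVec x i - r i = d * W.mulVec v i := by
        intro i
        have h1 : (A ^ (k+1)).mulVec x = A.mulVec ((A ^ k).mulVec x) := by
          rw [pow_succ', ← Matrix.mulVec_mulVec]
        have h2 : A.mulVec v = A.mulVec ((A ^ k).mulVec x) - A.mulVec r := by
          rw [← Matrix.mulVec_sub]; rfl
        have h3 : A.mulVec v i = (A ^ (k+1)).mulVec x i - r i := by
          rw [h2, h1]
          simp [hrfix]
        rw [← h3, key v hv0 i]
      constructor
      · calc ∑ i, ((A ^ (k+1)).mulVec x i - r i) = ∑ i, d * W.mulVec v i := by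
              exact Finset.sum_congr rfl fun i _ => hstep i
          _ = d * ∑ i, W.mulVec v i := by rw [Finset.mul_sum]
          _ = 0 := by rw [sumpres, hv0, mul_zero]
      · calc ∑ i, |(A ^ (k+1)).mulVec x i - r i| = ∑ i, |d * W.mulVec v i| := by
              exact Finset.sum_congr rfl fun i _ => by rw [hstep i]
          _ = d * ∑ i, |W.mulVec v i| := by
              rw [Finset.mul_sum]
              exact Finset.sum_congr rfl fun i _ => by
                rw [abs_mul, abs_of_nonneg hd.1.le]
          _ ≤ d * ∑ i, |v i| := by
              exact mul_le_mul_of_nonneg_left (contract v) hd.1.le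
          _ ≤ d * (d ^ k * ∑ i, |x i - r i|) := by
              exact mul_le_mul_of_nonneg_left ih1 hd.1.le
          _ = d ^ (k+1) * ∑ i, |x i - r i| := by ring
  refine ⟨fun k => (main k).2, ?_⟩
  rw [tendsto_pi_nhds]
  intro i
  rw [tendsto_iff_norm_sub_tendsto_zero]
  have hlim : Tendsto (fun k : ℕ => d ^ k * ∑ i, |x i - r i|) atTop (nhds 0) := by
    have := (tendsto_pow_atTop_nhds_zero_of_lt_one hd.1.le hd.2).mul_const
      (∑ i, |x i - r i|)
    simpa using this
  refine squeeze_zero (fun k => norm_nonneg _) (fun k => ?_) hlim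
  calc ‖(A ^ k).mulVec x i - r i‖ = |(A ^ k).mulVec x i - r i| := Real.norm_eq_abs _
    _ ≤ ∑ j, |(A ^ k).mulVec x j - r j| :=
        Finset.single_le_sum (f := fun j => |(A ^ k).mulVec x j - r j|)
          (fun j _ => abs_nonneg _) (Finset.mem_univ i)
    _ ≤ d ^ k * ∑ j, |x j - r j| := (main k).2
end
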